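/- Consistency obstruction: there exist a chiral merge tree M on 7 nodes and a homological sequence B of length 7 with B = (1,2,1,2,1,2,1) such that no discrete Morse function f on any tree satisfies both M_f = M and B^f = B; specifically, this holds when M is the full binary tree of depth 2 with all 4 leaves at depth 2. -/

import Mathlib

/-- A chiral merge tree: a full binary tree where each node's first child is the
left (L) child and its second child is the right (R) child. -/
inductive CMT : Type
  | leaf : CMT
  | node : CMT → CMT → CMT

/-- `t.isPos p` : the list of moves `p` (`false` = L, `true` = R) from the root
is a valid node (position) of `t`. -/
def CMT.isPos : CMT → List Bool → Prop
  | _, [] => True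
  | .leaf, _ :: _ => False
  | .node l _, false :: p => l.isPos p
  | .node _ r, true :: p => r.isPos p

/-- `t.isLeafPos p` : the position `p` is a leaf of `t`. -/
def CMT.isLeafPos : CMT → List Bool → Prop
  | .leaf, [] => True
  | .node _ _, [] => False
  | .leaf, _ :: _ => False
  | .node l _, false :: p => l.isLeafPos p
  | .node _ r, true :: p => r.isLeafPos p

/-- Number of nodes of a chiral merge tree. -/
def CMT.numNodes : CMT → ℕ
  | .leaf => 1
  | .node l r => l.numNodes + r.numNodes + 1

/-- The sublevel-connected Morse order, compared via path words.  `wle last p q` compares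
the path words `p` and `q` after a common prefix whose final letter is `last` (the root's
chirality is `L = false`): if `q` is exhausted (`q` is a prefix of `p`) then `p ≤ q`; at the
first disagreement, `p ≤ q` iff `p`'s letter equals the last common letter. -/
def wle : Bool → List Bool → List Bool → Prop
  | _, _, [] => True
  | _, [], _ :: _ => False
  | last, x :: p, y :: q => if x = y then wle x p q else x = last

/-- A (ℕ-valued) discrete Morse function on a graph `G`: weakly increasing, at most
2-to-1, and equal values occur only on an incident vertex–edge pair. -/
structure DMF {V : Type} [Fintype V] (G : SimpleGraph V) where
  fv : V → ℕ
  fe : G.edgeSet → ℕ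
  mono : ∀ (v : V) (e : G.edgeSet), v ∈ (e : Sym2 V) → fv v ≤ fe e
  fv_inj : ∀ v w : V, fv v = fv w → v = w
  fe_inj : ∀ e e' : G.edgeSet, fe e = fe e' → e = e'
  mixed : ∀ (v : V) (e : G.edgeSet), fv v = fe e → v ∈ (e : Sym2 V)

/-- The closed level subcomplex `G_a` (all simplices of value `≤ a`). -/
def DMF.subLE {V : Type} [Fintype V] {G : SimpleGraph V} (F : DMF G) (a : ℕ) :
    SimpleGraph {v : V // F.fv v ≤ a} where
  Adj u w := ∃ h : G.Adj u.1 w.1, F.fe ⟨s(u.1, w.1), h⟩ ≤ a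
  symm := by
    constructor
    rintro u w ⟨h, hle⟩
    refine ⟨h.symm, ?_⟩
    have he : (⟨s(w.1, u.1), h.symm⟩ : G.edgeSet) = ⟨s(u.1, w.1), h⟩ :=
      Subtype.ext (Sym2.eq_swap)
    rw [he]; exact hle
  loopless := by constructor; rintro u ⟨h, -⟩; exact G.irrefl h

/-- The open level subcomplex (all simplices of value `< a`), i.e. the level
subcomplex `G_{a-ε}` immediately preceding level `a`. -/
def DMF.subLT {V : Type} [Fintype V] {G : SimpleGraph V} (F : DMF G) (a : ℕ) :
    SimpleGraph {v : V // F.fv v < a} where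
  Adj u w := ∃ h : G.Adj u.1 w.1, F.fe ⟨s(u.1, w.1), h⟩ < a
  symm := by
    constructor
    rintro u w ⟨h, hle⟩
    refine ⟨h.symm, ?_⟩
    have he : (⟨s(w.1, u.1), h.symm⟩ : G.edgeSet) = ⟨s(u.1, w.1), h⟩ :=
      Subtype.ext (Sym2.eq_swap)
    rw [he]; exact hle
  loopless := by constructor; rintro u ⟨h, -⟩; exact G.irrefl h

/-- `b_0` of the level subcomplex at level `a`. -/
noncomputable def DMF.b0 {V : Type} [Fintype V] {G : SimpleGraph V} (F : DMF G) (a : ℕ) : ℕ :=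
  Nat.card (F.subLE a).ConnectedComponent

/-- A simplex (vertex or edge) is critical if no other simplex shares its value. -/
def DMF.crit {V : Type} [Fintype V] {G : SimpleGraph V} (F : DMF G) :
    V ⊕ G.edgeSet → Prop
  | .inl v => ∀ e : G.edgeSet, F.fv v ≠ F.fe e
  | .inr e => ∀ v : V, F.fv v ≠ F.fe e

/-- The value of a simplex. -/
def DMF.fval {V : Type} [Fintype V] {G : SimpleGraph V} (F : DMF G) :
    V ⊕ G.edgeSet → ℕ :=
  Sum.elim F.fv F.fe

/-- In the level subcomplex strictly below level `a`, the vertex `u` lies in the same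
connected component as the simplex `σ`. -/
def DMF.reachBelow {V : Type} [Fintype V] {G : SimpleGraph V} (F : DMF G) (a : ℕ)
    (u : {v : V // F.fv v < a}) : V ⊕ G.edgeSet → Prop
  | .inl x => ∃ hx : F.fv x < a, (F.subLT a).Reachable u ⟨x, hx⟩
  | .inr e => ∃ x, x ∈ (e : Sym2 V) ∧ ∃ hx : F.fv x < a, (F.subLT a).Reachable u ⟨x, hx⟩

/-- The merge tree induced by the discrete Morse function `F` is (isomorphic to) the
chiral merge tree `t`: there is a bijection `μ` from the nodes of `t` to the critical
simplices of `F` such that leaves correspond to critical vertices and inner nodes to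
critical edges, descendants have smaller critical values, for each inner node `p` the
two components merged by the corresponding critical edge are the components (of the
sublevel complex immediately preceding it) containing the critical simplices of the
left and right children of `p`, and the left child's component is the older one (its
leaves carry smaller values than those of the right child's component). -/
def InducesMergeTree {V : Type} [Fintype V] {G : SimpleGraph V} (t : CMT)
    (F : DMF G) : Prop :=
  ∃ μ : {p : List Bool // t.isPos p} → {σ : V ⊕ G.edgeSet // F.crit σ},
    Function.Bijective μ ∧
    (∀ p : {p : List Bool // t.isPos p},
      t.isLeafPos p.1 ↔ ∃ v : V, (μ p).1 = Sum.inl v) ∧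
    (∀ p q : {p : List Bool // t.isPos p}, q.1 <+: p.1 → q ≠ p →
      F.fval (μ p).1 < F.fval (μ q).1) ∧
    (∀ p : {p : List Bool // t.isPos p}, ¬ t.isLeafPos p.1 →
      ∃ e : G.edgeSet, (μ p).1 = Sum.inr e ∧
        ∃ (hL : t.isPos (p.1 ++ [false])) (hR : t.isPos (p.1 ++ [true])),
        ∃ u w : V, (e : Sym2 V) = s(u, w) ∧
          ∃ (hu : F.fv u < F.fe e) (hw : F.fv w < F.fe e),
            F.reachBelow (F.fe e) ⟨u, hu⟩ (μ ⟨p.1 ++ [false], hL⟩).1 ∧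
            F.reachBelow (F.fe e) ⟨w, hw⟩ (μ ⟨p.1 ++ [true], hR⟩).1) ∧
    (∀ p : {p : List Bool // t.isPos p}, ¬ t.isLeafPos p.1 →
      ∃ qL : {p : List Bool // t.isPos p}, (p.1 ++ [false]) <+: qL.1 ∧ t.isLeafPos qL.1 ∧
        ∀ qR : {p : List Bool // t.isPos p}, (p.1 ++ [true]) <+: qR.1 → t.isLeafPos qR.1 →
          F.fval (μ qL).1 < F.fval (μ qR).1)

/-- The homological sequence of `F` is `B`: enumerating the critical values of `F`
as `c_0 < c_1 < ⋯ < c_{n-1}`, the level subcomplex at `c_i` has `B i` connected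
components. -/
def HomSeqIs {V : Type} [Fintype V] {G : SimpleGraph V} (F : DMF G)
    (n : ℕ) (B : Fin n → ℕ) : Prop :=
  ∃ c : Fin n → ℕ, StrictMono c ∧
    (∀ x : ℕ, (∃ i, c i = x) ↔
      ((∃ v : V, (∀ e : G.edgeSet, F.fv v ≠ F.fe e) ∧ F.fv v = x) ∨
        (∃ e : G.edgeSet, (∀ v : V, F.fv v ≠ F.fe e) ∧ F.fe e = x))) ∧
    (∀ i : Fin n, F.b0 (c i) = B i)

/-- The number of nodes of `t` that are `≤ p` in the sublevel-connected Morse order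
(`p` itself included). -/
noncomputable def rankLe (t : CMT) (p : List Bool) : ℕ :=
  Nat.card {q : {q : List Bool // t.isPos q} // wle false q.1 p}

/-- `J_0^M (i)`: the `i`-th entry of the homological sequence induced by the merge tree
algorithm on `t`, namely the number of leaves minus the number of inner nodes among the
first `i+1` nodes of `t` in the sublevel-connected Morse order. -/
noncomputable def J0 (t : CMT) (i : ℕ) : ℕ :=
  Nat.card {p : {p : List Bool // t.isPos p} // t.isLeafPos p.1 ∧ rankLe t p.1 ≤ i + 1} -
    Nat.card {p : {p : List Bool // t.isPos p} // ¬ t.isLeafPos p.1 ∧ rankLe t p.1 ≤ i + 1}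


open SimpleGraph

private lemma reach_decomp {W : Type} {H : SimpleGraph W} {u v : W}
    {x y : W} (hr : H.Reachable x y) :
    (H.deleteEdges {s(u,v)}).Reachable x y ∨
    ((H.deleteEdges {s(u,v)}).Reachable x u ∧ (H.deleteEdges {s(u,v)}).Reachable v y) ∨
    ((H.deleteEdges {s(u,v)}).Reachable x v ∧ (H.deleteEdges {s(u,v)}).Reachable u y) := by
  obtain ⟨w⟩ := hr
  induction w with
  | nil => exact Or.inl (Reachable.refl _)
  | @cons x z y hxz p ih =>
    by_cases he : s(x, z) = s(u, v)
    · rw [Sym2.eq_iff] at he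
      rcases he with ⟨rfl, rfl⟩ | ⟨rfl, rfl⟩
      · rcases ih with h | ⟨h1, h2⟩ | ⟨h1, h2⟩
        · exact Or.inr (Or.inl ⟨Reachable.refl _, h⟩)
        · exact Or.inr (Or.inl ⟨Reachable.refl _, h2⟩)
        · exact Or.inl h2
      · rcases ih with h | ⟨h1, h2⟩ | ⟨h1, h2⟩
        · exact Or.inr (Or.inr ⟨Reachable.refl _, h⟩)
        · exact Or.inl h2
        · exact Or.inr (Or.inr ⟨Reachable.refl _, h2⟩)
    · have hadj : (H.deleteEdges {s(u,v)}).Adj x z := by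
        rw [deleteEdges_adj]
        exact ⟨hxz, by simpa using he⟩
      rcases ih with h | ⟨h1, h2⟩ | ⟨h1, h2⟩
      · exact Or.inl (hadj.reachable.trans h)
      · exact Or.inr (Or.inl ⟨hadj.reachable.trans h1, h2⟩)
      · exact Or.inr (Or.inr ⟨hadj.reachable.trans h1, h2⟩)

private lemma card_cc_deleteEdge {W : Type} [Fintype W] {H : SimpleGraph W} {u v : W}
    (h : H.Adj u v) (hbr : ¬ (H.deleteEdges {s(u,v)}).Reachable u v) :
    Nat.card (H.deleteEdges {s(u,v)}).ConnectedComponent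
      = Nat.card H.ConnectedComponent + 1 := by
  classical
  set H' := H.deleteEdges {s(u,v)} with hH'
  have hle : H' ≤ H := deleteEdges_le _
  let φ : H'.ConnectedComponent → H.ConnectedComponent :=
    ConnectedComponent.map (Hom.ofLE hle)
  have hφmk : ∀ w : W, φ (H'.connectedComponentMk w) = H.connectedComponentMk w := by
    intro w; rfl
  set cv := H'.connectedComponentMk v with hcv
  let ψ : {C : H'.ConnectedComponent // C ≠ cv} → H.ConnectedComponent := fun C => φ C.1
  have hψbij : Function.Bijective ψ := by
    constructor
    · rintro ⟨C, hC⟩ ⟨D, hD⟩ hCD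
      obtain ⟨x, rfl⟩ := C.exists_rep
      obtain ⟨y, rfl⟩ := D.exists_rep
      simp only [ψ, hφmk] at hCD
      have hr : H.Reachable x y := ConnectedComponent.exact hCD
      rcases reach_decomp (u := u) (v := v) hr with hr' | ⟨h1, h2⟩ | ⟨h1, h2⟩
      · exact Subtype.ext (ConnectedComponent.sound hr')
      · exact absurd (ConnectedComponent.sound h2.symm) hD
      · exact absurd (ConnectedComponent.sound h1) hC
    · intro E
      obtain ⟨w, rfl⟩ := E.exists_rep
      by_cases hw : H'.connectedComponentMk w = cv
      · have hu : H'.connectedComponentMk u ≠ cv := by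
          intro hc
          exact hbr (ConnectedComponent.exact hc)
        refine ⟨⟨_, hu⟩, ?_⟩
        have e1 : ψ ⟨_, hu⟩ = H.connectedComponentMk u := hφmk u
        have e2 : φ cv = H.connectedComponentMk v := hφmk v
        have e3 : φ (H'.connectedComponentMk w) = H.connectedComponentMk w := hφmk w
        rw [hw, e2] at e3
        exact e1.trans ((ConnectedComponent.sound h.reachable).trans e3)
      · exact ⟨⟨_, hw⟩, hφmk w⟩
  have h1 : Nat.card {C : H'.ConnectedComponent // C ≠ cv} = Nat.card H.ConnectedComponent :=
    Nat.card_eq_of_bijective ψ hψbij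
  have h2 : Nat.card {C : H'.ConnectedComponent // C = cv} = 1 := by
    rw [Nat.card_eq_one_iff_unique]
    exact ⟨⟨fun a b => Subtype.ext (a.2.trans b.2.symm)⟩, ⟨⟨cv, rfl⟩⟩⟩
  have h3 : Nat.card {C : H'.ConnectedComponent // C = cv}
      + Nat.card {C : H'.ConnectedComponent // C ≠ cv}
      = Nat.card H'.ConnectedComponent := by
    rw [← Nat.card_sum]
    exact Nat.card_congr (Equiv.sumCompl _)
  omega

private lemma forest_card {W : Type} [Fintype W] :
    ∀ (n : ℕ) (H : SimpleGraph W), H.IsAcyclic → Nat.card H.edgeSet = n →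
      Nat.card H.ConnectedComponent + n = Nat.card W := by
  intro n
  induction n with
  | zero =>
    intro H hac hcard
    have hfin : Finite H.edgeSet := Set.Finite.to_subtype (H.edgeSet.toFinite)
    have hemp : IsEmpty H.edgeSet := by
      rcases Nat.card_eq_zero.mp hcard with h | h
      · exact h
      · exact absurd hfin h.not_finite
    have hbot : H = ⊥ := edgeSet_eq_empty.mp (Set.isEmpty_coe_sort.mp hemp)
    subst hbot
    have hb : Function.Bijective ((⊥ : SimpleGraph W).connectedComponentMk) := by
      constructor
      · intro a b hab
        exact reachable_bot.mp (ConnectedComponent.exact hab)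
      · exact fun E => E.exists_rep
    rw [Nat.add_zero, Nat.card_eq_of_bijective _ hb]
  | succ n ih =>
    intro H hac hcard
    have hfin : Finite H.edgeSet := Set.Finite.to_subtype (H.edgeSet.toFinite)
    have hne : Nonempty H.edgeSet := (Nat.card_pos_iff.mp (by omega)).1
    have hadj' : ∃ u v, H.Adj u v := by
      obtain ⟨⟨e, he⟩⟩ := hne
      revert he
      induction e using Sym2.ind with
      | _ u v => exact fun he => ⟨u, v, H.mem_edgeSet.mp he⟩
    obtain ⟨u, v, hadj⟩ := hadj'
    have hbr : ¬ (H.deleteEdges {s(u,v)}).Reachable u v := by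
      have hb := (isAcyclic_iff_forall_adj_isBridge.mp hac) hadj
      rw [isBridge_iff] at hb
      exact hb
    have hac' : (H.deleteEdges {s(u,v)}).IsAcyclic := by
      intro x c hc
      exact hac (c.map (Hom.ofLE (deleteEdges_le _)))
        (hc.map (fun a b hab => hab))
    have hcard' : Nat.card (H.deleteEdges {s(u,v)}).edgeSet = n := by
      rw [edgeSet_deleteEdges, Nat.card_coe_set_eq,
        Set.ncard_diff_singleton_of_mem (H.mem_edgeSet.mpr hadj)]
      rw [Nat.card_coe_set_eq] at hcard
      omega
    have hih := ih _ hac' hcard'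
    have hcc := card_cc_deleteEdge hadj hbr
    omega



variable {V : Type} [Fintype V] {G : SimpleGraph V}

private def iota (F : DMF G) (a : ℕ) : F.subLE a →g G :=
  ⟨Subtype.val, fun {u w} h => h.choose⟩

private lemma subLE_acyclic (F : DMF G) (hG : G.IsAcyclic) (a : ℕ) :
    (F.subLE a).IsAcyclic := by
  intro x c hc
  exact hG _ (hc.map (f := iota F a) Subtype.val_injective)

private lemma card_edge_subLE (F : DMF G) (a : ℕ) :
    Nat.card (F.subLE a).edgeSet = Nat.card {e : G.edgeSet // F.fe e ≤ a} := by
  have hbound : ∀ e' : (F.subLE a).edgeSet, F.fe ((iota F a).mapEdgeSet e') ≤ a := by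
    rintro ⟨e, he⟩
    revert he
    induction e using Sym2.ind with
    | _ u w =>
      intro he
      obtain ⟨hadj, hle⟩ := (F.subLE a).mem_edgeSet.mp he
      have heq : ((iota F a).mapEdgeSet ⟨s(u,w), he⟩ : G.edgeSet) = ⟨s(u.1, w.1), hadj⟩ := by
        apply Subtype.ext
        simp only [Hom.mapEdgeSet, iota, Sym2.map_pair_eq, Sym2.eq_iff]
        exact Or.inl ⟨rfl, rfl⟩
      rw [heq]
      exact hle
  apply Nat.card_eq_of_bijective (fun e' => ⟨(iota F a).mapEdgeSet e', hbound e'⟩)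
  constructor
  · intro e' d' h
    exact Hom.mapEdgeSet.injective _ Subtype.val_injective (congrArg Subtype.val h)
  · rintro ⟨⟨es, hes⟩, hle⟩
    revert hes
    induction es using Sym2.ind with
    | _ u w =>
      intro hes hle
      have hadj : G.Adj u w := G.mem_edgeSet.mp hes
      have hu : F.fv u ≤ a :=
        le_trans (F.mono u ⟨s(u,w), hes⟩ (Sym2.mem_mk_left u w)) hle
      have hw : F.fv w ≤ a :=
        le_trans (F.mono w ⟨s(u,w), hes⟩ (Sym2.mem_mk_right u w)) hle
      have hadj' : (F.subLE a).Adj ⟨u, hu⟩ ⟨w, hw⟩ := ⟨hadj, hle⟩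
      refine ⟨⟨s(⟨u,hu⟩, ⟨w,hw⟩), (F.subLE a).mem_edgeSet.mpr hadj'⟩, ?_⟩
      apply Subtype.ext
      apply Subtype.ext
      simp only [Hom.mapEdgeSet, iota, Sym2.map_pair_eq, Sym2.eq_iff]
      exact Or.inl ⟨rfl, rfl⟩

private lemma card_noncrit (F : DMF G) (a : ℕ) :
    Nat.card {v : V // F.fv v ≤ a ∧ ¬ F.crit (Sum.inl v)} =
      Nat.card {e : G.edgeSet // F.fe e ≤ a ∧ ¬ F.crit (Sum.inr e)} := by
  classical
  have hch : ∀ v : V, ¬ F.crit (Sum.inl v) → ∃ e : G.edgeSet, F.fv v = F.fe e := by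
    intro v hv
    simpa [DMF.crit] using hv
  apply Nat.card_eq_of_bijective
    (fun x => ⟨(hch x.1 x.2.2).choose, by
      rw [← (hch x.1 x.2.2).choose_spec]
      exact ⟨x.2.1, fun hc => hc x.1 (hch x.1 x.2.2).choose_spec⟩⟩)
  constructor
  · rintro ⟨v, hv⟩ ⟨v', hv'⟩ h
    have h1 := (hch v hv.2).choose_spec
    have h2 := (hch v' hv'.2).choose_spec
    have h3 : F.fe (hch v hv.2).choose = F.fe (hch v' hv'.2).choose :=
      congrArg (fun x => F.fe x.1) h
    exact Subtype.ext (F.fv_inj _ _ (h1.trans (h3.trans h2.symm)))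
  · rintro ⟨e, hle, hnc⟩
    have hv : ∃ v : V, F.fv v = F.fe e := by simpa [DMF.crit] using hnc
    obtain ⟨v, hv⟩ := hv
    have hvnc : ¬ F.crit (Sum.inl v) := fun hc => hc e hv
    refine ⟨⟨v, ⟨hv ▸ hle, hvnc⟩⟩, ?_⟩
    apply Subtype.ext
    exact F.fe_inj _ _ (((hch v hvnc).choose_spec).symm.trans hv)

private lemma card_split {α : Type} [Finite α] (p q : α → Prop) :
    Nat.card {x : α // p x} =
      Nat.card {x : α // p x ∧ q x} + Nat.card {x : α // p x ∧ ¬ q x} := by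
  classical
  rw [← Nat.card_sum]
  apply Nat.card_congr
  exact (((Equiv.subtypeSubtypeEquivSubtypeInter p q).symm.sumCongr
    (Equiv.subtypeSubtypeEquivSubtypeInter p (fun x => ¬ q x)).symm).trans
    (Equiv.sumCompl _)).symm

private lemma b0_eq (F : DMF G) (hG : G.IsAcyclic) (a : ℕ) :
    F.b0 a + Nat.card {e : G.edgeSet // F.fe e ≤ a ∧ F.crit (Sum.inr e)} =
      Nat.card {v : V // F.fv v ≤ a ∧ F.crit (Sum.inl v)} := by
  have hforest := forest_card (Nat.card (F.subLE a).edgeSet) (F.subLE a)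
    (subLE_acyclic F hG a) rfl
  rw [card_edge_subLE F a] at hforest
  have hV : Nat.card {v : V // F.fv v ≤ a} =
      Nat.card {v : V // F.fv v ≤ a ∧ F.crit (Sum.inl v)} +
      Nat.card {v : V // F.fv v ≤ a ∧ ¬ F.crit (Sum.inl v)} :=
    card_split _ _
  have hE : Nat.card {e : G.edgeSet // F.fe e ≤ a} =
      Nat.card {e : G.edgeSet // F.fe e ≤ a ∧ F.crit (Sum.inr e)} +
      Nat.card {e : G.edgeSet // F.fe e ≤ a ∧ ¬ F.crit (Sum.inr e)} :=
    card_split _ _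
  have hnc := card_noncrit F a
  unfold DMF.b0
  omega


private lemma four_le_card {α : Type} [Finite α] (a b c d : α) (hab : a ≠ b)
    (hac : a ≠ c) (had : a ≠ d) (hbc : b ≠ c) (hbd : b ≠ d) (hcd : c ≠ d) :
    4 ≤ Nat.card α := by
  classical
  have : Fintype α := Fintype.ofFinite α
  rw [Nat.card_eq_fintype_card]
  have hsub : ({a, b, c, d} : Finset α).card = 4 := by
    rw [Finset.card_insert_of_notMem (by simp [hab, hac, had]),
      Finset.card_insert_of_notMem (by simp [hbc, hbd]),
      Finset.card_insert_of_notMem (by simp [hcd]), Finset.card_singleton]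
  calc 4 = ({a, b, c, d} : Finset α).card := hsub.symm
    _ ≤ Fintype.card α := Finset.card_le_univ _

private lemma pos_cases (p : List Bool)
    (h : (CMT.node (CMT.node .leaf .leaf) (CMT.node .leaf .leaf)).isPos p) :
    p = [] ∨ p = [false] ∨ p = [true] ∨ p = [false, false] ∨ p = [false, true] ∨
      p = [true, false] ∨ p = [true, true] := by
  match p with
  | [] => tauto
  | [b] => cases b <;> tauto
  | [b, b'] => cases b <;> cases b' <;> tauto
  | b :: b' :: b'' :: r =>
    exfalso
    cases b <;> cases b' <;> cases b'' <;> exact h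

private lemma count_crit {V : Type} [Fintype V] {G : SimpleGraph V} (F : DMF G)
    {n : ℕ} (c : Fin n → ℕ) (hmono : StrictMono c)
    (hchar : ∀ x : ℕ, (∃ i, c i = x) ↔
      ((∃ v : V, (∀ e : G.edgeSet, F.fv v ≠ F.fe e) ∧ F.fv v = x) ∨
        (∃ e : G.edgeSet, (∀ v : V, F.fv v ≠ F.fe e) ∧ F.fe e = x)))
    (i : Fin n) :
    Nat.card {v : V // F.fv v ≤ c i ∧ F.crit (Sum.inl v)} +
      Nat.card {e : G.edgeSet // F.fe e ≤ c i ∧ F.crit (Sum.inr e)} = (i : ℕ) + 1 := by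
  classical
  rw [← Nat.card_sum]
  have hval : ∀ σ : {v : V // F.fv v ≤ c i ∧ F.crit (Sum.inl v)} ⊕
      {e : G.edgeSet // F.fe e ≤ c i ∧ F.crit (Sum.inr e)},
      ∃ j : Fin n, c j = Sum.elim (fun v => F.fv v.1) (fun e => F.fe e.1) σ := by
    rintro (⟨v, hle, hcrit⟩ | ⟨e, hle, hcrit⟩)
    · exact (hchar _).mpr (Or.inl ⟨v, hcrit, rfl⟩)
    · exact (hchar _).mpr (Or.inr ⟨e, hcrit, rfl⟩)
  have hle : ∀ σ, ((hval σ).choose : ℕ) ≤ (i : ℕ) := by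
    intro σ
    have h := (hval σ).choose_spec
    have : c (hval σ).choose ≤ c i := by
      rw [h]; rcases σ with ⟨v, hle, hcrit⟩ | ⟨e, hle, hcrit⟩ <;> exact hle
    exact hmono.le_iff_le.mp this
  have hcard : Nat.card {j : Fin n // (j : ℕ) ≤ (i : ℕ)} = (i : ℕ) + 1 := by
    rw [Nat.card_congr (⟨fun j => (⟨j.1.1, Nat.lt_succ_of_le j.2⟩ : Fin ((i : ℕ) + 1)),
      fun k => ⟨⟨k.1, lt_of_le_of_lt (Nat.le_of_lt_succ k.2) i.2⟩, Nat.le_of_lt_succ k.2⟩,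
      fun j => by apply Subtype.ext; apply Fin.ext; rfl,
      fun k => by apply Fin.ext; rfl⟩ :
      {j : Fin n // (j : ℕ) ≤ (i : ℕ)} ≃ Fin ((i : ℕ) + 1)),
      Nat.card_eq_fintype_card, Fintype.card_fin]
  rw [← hcard]
  apply Nat.card_eq_of_bijective (fun σ => ⟨(hval σ).choose, hle σ⟩)
  constructor
  · intro σ τ h
    have hcc : c (hval σ).choose = c (hval τ).choose := by
      have : (hval σ).choose = (hval τ).choose := by
        have := congrArg Subtype.val h
        exact Fin.ext (congrArg Fin.val this)
      rw [this]
    have hvv := ((hval σ).choose_spec.symm.trans hcc).trans (hval τ).choose_spec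
    rcases σ with ⟨v, hv⟩ | ⟨e, he⟩ <;> rcases τ with ⟨v', hv'⟩ | ⟨e', he'⟩ <;>
      simp only [Sum.elim_inl, Sum.elim_inr] at hvv
    · exact congrArg Sum.inl (Subtype.ext (F.fv_inj _ _ hvv))
    · exact absurd hvv (hv.2 e')
    · exact absurd hvv.symm (hv'.2 e)
    · exact congrArg Sum.inr (Subtype.ext (F.fe_inj _ _ hvv))
  · rintro ⟨j, hj⟩
    rcases (hchar (c j)).mp ⟨j, rfl⟩ with ⟨v, hcrit, hx⟩ | ⟨e, hcrit, hx⟩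
    · have hcv : F.crit (Sum.inl v) := hcrit
      refine ⟨Sum.inl ⟨v, ?_, hcv⟩, ?_⟩
      · rw [hx]; exact hmono.le_iff_le.mpr hj
      · apply Subtype.ext
        apply hmono.injective
        rw [(hval _).choose_spec]
        exact hx
    · have hce : F.crit (Sum.inr e) := hcrit
      refine ⟨Sum.inr ⟨e, ?_, hce⟩, ?_⟩
      · rw [hx]; exact hmono.le_iff_le.mpr hj
      · apply Subtype.ext
        apply hmono.injective
        rw [(hval _).choose_spec]
        exact hx

/-- **Consistency obstruction.**  For the full binary merge tree of depth 2 (all four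
leaves at depth 2, both children of the root inner nodes) and the homological sequence
`B = (1,2,1,2,1,2,1)`, there is no discrete Morse function `f` on a tree whose induced
merge tree is `M` and whose induced homological sequence is `B`. -/
theorem no_dmf_for_incompatible_pair :
    ¬ ∃ (V : Type) (_ : Fintype V) (G : SimpleGraph V) (F : DMF G),
        G.IsTree ∧
        InducesMergeTree (CMT.node (CMT.node .leaf .leaf) (CMT.node .leaf .leaf)) F ∧
        HomSeqIs F 7 ![1, 2, 1, 2, 1, 2, 1] := by
  rintro ⟨V, _, G, F, htree, ⟨μ, hbij, hleaf, hmono, -, -⟩, ⟨c, hc, hchar, hb0⟩⟩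
  classical
  obtain ⟨E3, hE3⟩ : ∃ E, (μ ⟨[], trivial⟩).1 = Sum.inr E := by
    rcases h : (μ ⟨[], trivial⟩).1 with v | E
    · exact absurd ((hleaf ⟨[], trivial⟩).mpr ⟨v, h⟩) (fun hh => hh)
    · exact ⟨E, rfl⟩
  obtain ⟨E1, hE1⟩ : ∃ E, (μ ⟨[false], trivial⟩).1 = Sum.inr E := by
    rcases h : (μ ⟨[false], trivial⟩).1 with v | E
    · exact absurd ((hleaf ⟨[false], trivial⟩).mpr ⟨v, h⟩) (fun hh => hh)
    · exact ⟨E, rfl⟩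
  obtain ⟨E2, hE2⟩ : ∃ E, (μ ⟨[true], trivial⟩).1 = Sum.inr E := by
    rcases h : (μ ⟨[true], trivial⟩).1 with v | E
    · exact absurd ((hleaf ⟨[true], trivial⟩).mpr ⟨v, h⟩) (fun hh => hh)
    · exact ⟨E, rfl⟩
  obtain ⟨v1, hv1⟩ := (hleaf ⟨[false, false], trivial⟩).mp trivial
  obtain ⟨v2, hv2⟩ := (hleaf ⟨[false, true], trivial⟩).mp trivial
  obtain ⟨v3, hv3⟩ := (hleaf ⟨[true, false], trivial⟩).mp trivial
  obtain ⟨v4, hv4⟩ := (hleaf ⟨[true, true], trivial⟩).mp trivial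
  have hcv1 : F.crit (Sum.inl v1) := hv1 ▸ (μ ⟨[false, false], trivial⟩).2
  have hcv2 : F.crit (Sum.inl v2) := hv2 ▸ (μ ⟨[false, true], trivial⟩).2
  have hcv3 : F.crit (Sum.inl v3) := hv3 ▸ (μ ⟨[true, false], trivial⟩).2
  have hcv4 : F.crit (Sum.inl v4) := hv4 ▸ (μ ⟨[true, true], trivial⟩).2
  have hμv : ∀ (p q : {p : List Bool //
      (CMT.node (CMT.node .leaf .leaf) (CMT.node .leaf .leaf)).isPos p}),
      p.1 ≠ q.1 → (μ p).1 ≠ (μ q).1 := by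
    intro p q hpq h
    exact hpq (congrArg Subtype.val (hbij.1 (Subtype.ext h)))
  have ha1 : F.fv v1 < F.fe E1 := by
    have h := hmono ⟨[false, false], trivial⟩ ⟨[false], trivial⟩ ⟨[false], rfl⟩
      (fun hh => by simpa using congrArg Subtype.val hh)
    rw [hv1, hE1] at h
    exact h
  have ha2 : F.fv v2 < F.fe E1 := by
    have h := hmono ⟨[false, true], trivial⟩ ⟨[false], trivial⟩ ⟨[true], rfl⟩
      (fun hh => by simpa using congrArg Subtype.val hh)
    rw [hv2, hE1] at h
    exact h
  have ha3 : F.fv v3 < F.fe E2 := by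
    have h := hmono ⟨[true, false], trivial⟩ ⟨[true], trivial⟩ ⟨[false], rfl⟩
      (fun hh => by simpa using congrArg Subtype.val hh)
    rw [hv3, hE2] at h
    exact h
  have ha4 : F.fv v4 < F.fe E2 := by
    have h := hmono ⟨[true, true], trivial⟩ ⟨[true], trivial⟩ ⟨[true], rfl⟩
      (fun hh => by simpa using congrArg Subtype.val hh)
    rw [hv4, hE2] at h
    exact h
  have he13 : F.fe E1 < F.fe E3 := by
    have h := hmono ⟨[false], trivial⟩ ⟨[], trivial⟩ ⟨[false], rfl⟩
      (fun hh => by simpa using congrArg Subtype.val hh)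
    rw [hE1, hE3] at h
    exact h
  have he23 : F.fe E2 < F.fe E3 := by
    have h := hmono ⟨[true], trivial⟩ ⟨[], trivial⟩ ⟨[true], rfl⟩
      (fun hh => by simpa using congrArg Subtype.val hh)
    rw [hE2, hE3] at h
    exact h
  have hv12 : F.fv v1 ≠ F.fv v2 := fun h =>
    hμv ⟨[false, false], trivial⟩ ⟨[false, true], trivial⟩ (by simp)
      (by rw [hv1, hv2, F.fv_inj _ _ h])
  have hv13 : F.fv v1 ≠ F.fv v3 := fun h =>
    hμv ⟨[false, false], trivial⟩ ⟨[true, false], trivial⟩ (by simp)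
      (by rw [hv1, hv3, F.fv_inj _ _ h])
  have hv14 : F.fv v1 ≠ F.fv v4 := fun h =>
    hμv ⟨[false, false], trivial⟩ ⟨[true, true], trivial⟩ (by simp)
      (by rw [hv1, hv4, F.fv_inj _ _ h])
  have hv23 : F.fv v2 ≠ F.fv v3 := fun h =>
    hμv ⟨[false, true], trivial⟩ ⟨[true, false], trivial⟩ (by simp)
      (by rw [hv2, hv3, F.fv_inj _ _ h])
  have hv24 : F.fv v2 ≠ F.fv v4 := fun h =>
    hμv ⟨[false, true], trivial⟩ ⟨[true, true], trivial⟩ (by simp)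
      (by rw [hv2, hv4, F.fv_inj _ _ h])
  have hv34 : F.fv v3 ≠ F.fv v4 := fun h =>
    hμv ⟨[true, false], trivial⟩ ⟨[true, true], trivial⟩ (by simp)
      (by rw [hv3, hv4, F.fv_inj _ _ h])
  have hedge : ∀ (E : G.edgeSet), F.crit (Sum.inr E) → E = E1 ∨ E = E2 ∨ E = E3 := by
    intro E hE
    obtain ⟨p, hp⟩ := hbij.2 ⟨Sum.inr E, hE⟩
    have hp' : (μ p).1 = Sum.inr E := by rw [hp]
    rcases pos_cases p.1 p.2 with h | h | h | h | h | h | h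
    · have hq : p = ⟨[], trivial⟩ := Subtype.ext h
      rw [hq, hE3] at hp'
      exact Or.inr (Or.inr (Sum.inr.inj hp').symm)
    · have hq : p = ⟨[false], trivial⟩ := Subtype.ext h
      rw [hq, hE1] at hp'
      exact Or.inl (Sum.inr.inj hp').symm
    · have hq : p = ⟨[true], trivial⟩ := Subtype.ext h
      rw [hq, hE2] at hp'
      exact Or.inr (Or.inl (Sum.inr.inj hp').symm)
    · have hq : p = ⟨[false, false], trivial⟩ := Subtype.ext h
      rw [hq, hv1] at hp'
      simp at hp'
    · have hq : p = ⟨[false, true], trivial⟩ := Subtype.ext h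
      rw [hq, hv2] at hp'
      simp at hp'
    · have hq : p = ⟨[true, false], trivial⟩ := Subtype.ext h
      rw [hq, hv3] at hp'
      simp at hp'
    · have hq : p = ⟨[true, true], trivial⟩ := Subtype.ext h
      rw [hq, hv4] at hp'
      simp at hp'
  have hkey := b0_eq F htree.IsAcyclic (c 4)
  have hcnt := count_crit F c hc hchar 4
  have hB4 : F.b0 (c 4) = 1 := by
    have h := hb0 4
    simpa using h
  rw [hB4] at hkey
  have hval4 : ((4 : Fin 7) : ℕ) = 4 := rfl
  rw [hval4] at hcnt
  have hCE : Nat.card {e : G.edgeSet // F.fe e ≤ c 4 ∧ F.crit (Sum.inr e)} = 2 := by omega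
  obtain ⟨x, y, hxy, -⟩ := Nat.card_eq_two_iff.mp hCE
  have hne : x.1 ≠ y.1 := fun h => hxy (Subtype.ext h)
  have hboth : F.fe E1 ≤ c 4 ∧ F.fe E2 ≤ c 4 := by
    have hx := x.2.1
    have hy := y.2.1
    rcases hedge x.1 x.2.2 with h1 | h1 | h1 <;> rcases hedge y.1 y.2.2 with h2 | h2 | h2 <;>
        rw [h1] at hx hne <;> rw [h2] at hy hne <;>
      first
        | exact absurd rfl hne
        | exact ⟨hx, hy⟩
        | exact ⟨hy, hx⟩
        | exact ⟨hx, le_trans (le_of_lt he23) hy⟩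
        | exact ⟨hy, le_trans (le_of_lt he23) hx⟩
        | exact ⟨le_trans (le_of_lt he13) hy, hx⟩
        | exact ⟨le_trans (le_of_lt he13) hx, hy⟩
  have hm1 : F.fv v1 ≤ c 4 := le_trans ha1.le hboth.1
  have hm2 : F.fv v2 ≤ c 4 := le_trans ha2.le hboth.1
  have hm3 : F.fv v3 ≤ c 4 := le_trans ha3.le hboth.2
  have hm4 : F.fv v4 ≤ c 4 := le_trans ha4.le hboth.2
  have hfour := four_le_card
    (⟨v1, hm1, hcv1⟩ : {v : V // F.fv v ≤ c 4 ∧ F.crit (Sum.inl v)})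
    ⟨v2, hm2, hcv2⟩ ⟨v3, hm3, hcv3⟩ ⟨v4, hm4, hcv4⟩
    (fun h => hv12 (congrArg (fun z => F.fv z.1) h))
    (fun h => hv13 (congrArg (fun z => F.fv z.1) h))
    (fun h => hv14 (congrArg (fun z => F.fv z.1) h))
    (fun h => hv23 (congrArg (fun z => F.fv z.1) h))
    (fun h => hv24 (congrArg (fun z => F.fv z.1) h))
    (fun h => hv34 (congrArg (fun z => F.fv z.1) h))
  omega
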